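/- The map φ ↦ 𝕀₂(φ), from endomorphisms of the free semigroup A_n⁺ to n+n² dimensional integer matrices, is an anti-homomorphism of monoids: 𝕀₂(ψ∘φ) = 𝕀₂(φ)·𝕀₂(ψ). Equivalently, F₁(ψ∘φ) = F₁(φ)F₁(ψ), T₂(ψ∘φ) = T₂(φ)T₂(ψ), and F₂(ψ∘φ) = F₁(φ)F₂(ψ) + F₂(φ)T₂(ψ). -/

import Mathlib

/-- `occ w u` is the number of occurrences of `w` as a (contiguous) factor
of `u`. -/
def occ {α : Type*} [DecidableEq α] (w u : List α) : ℕ :=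
  u.tails.countP fun t => decide (w <+: t)

/-- `F1 φ` is the incidence matrix of the substitution `φ`:
its (i,j)-entry counts occurrences of the letter j in φ(i). -/
def F1 {n : ℕ} (φ : Fin n → List (Fin n)) : Matrix (Fin n) (Fin n) ℤ :=
  Matrix.of fun i j => (occ [j] (φ i) : ℤ)

/-- `F2 φ` is the 2-frequency matrix: its (i,(j,k))-entry counts occurrences
of the two-letter word jk as a factor of φ(i). -/
def F2 {n : ℕ} (φ : Fin n → List (Fin n)) :
    Matrix (Fin n) (Fin n × Fin n) ℤ :=
  Matrix.of fun i p => (occ [p.1, p.2] (φ i) : ℤ)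

/-- `T2 φ` records concatenation junctions: its ((r,s),(t,u))-entry is 1 iff
t is the last letter of φ(r) and u is the first letter of φ(s). -/
def T2 {n : ℕ} (φ : Fin n → List (Fin n)) :
    Matrix (Fin n × Fin n) (Fin n × Fin n) ℤ :=
  Matrix.of fun p q =>
    if (φ p.1).getLast? = some q.1 ∧ (φ p.2).head? = some q.2 then 1 else 0

/-- The block matrix 𝕀₂(φ) = [[F₁(φ), F₂(φ)], [0, T₂(φ)]]. -/
def I2 {n : ℕ} (φ : Fin n → List (Fin n)) :
    Matrix (Fin n ⊕ Fin n × Fin n) (Fin n ⊕ Fin n × Fin n) ℤ :=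
  Matrix.fromBlocks (F1 φ) (F2 φ) 0 (T2 φ)

/-- Composition of substitutions: `compSubst ψ φ` corresponds to `ψ ∘ φ`. -/
def compSubst {n : ℕ} (ψ φ : Fin n → List (Fin n)) : Fin n → List (Fin n) :=
  fun i => ((φ i).map ψ).flatten

section Helpers
variable {α : Type*} [DecidableEq α]

lemma singleton_prefix_iff (k : α) (u : List α) : [k] <+: u ↔ u.head? = some k := by
  cases u with
  | nil => simp
  | cons a u => simp [List.cons_prefix_cons, eq_comm]

lemma occ_nil (w : List α) (hw : w ≠ []) : occ w [] = 0 := by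
  simp [occ, List.prefix_nil, hw]

lemma occ_cons (w : List α) (a : α) (u : List α) :
    occ w (a :: u) = occ w u + (if w <+: (a :: u) then 1 else 0) := by
  rw [occ, occ, List.tails_cons, List.countP_cons]
  simp

lemma occ1_cons (j a : α) (u : List α) :
    occ [j] (a :: u) = occ [j] u + (if a = j then 1 else 0) := by
  rw [occ_cons]
  simp [List.cons_prefix_cons, eq_comm]

lemma occ2_cons (j k a : α) (u : List α) :
    occ [j, k] (a :: u) = occ [j, k] u + (if a = j ∧ u.head? = some k then 1 else 0) := by
  rw [occ_cons]
  simp [List.cons_prefix_cons, singleton_prefix_iff, eq_comm]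

lemma occ1_append (j : α) (u v : List α) :
    occ [j] (u ++ v) = occ [j] u + occ [j] v := by
  induction u with
  | nil => simp [occ_nil _ (List.cons_ne_nil _ _)]
  | cons a u ih => simp only [List.cons_append, occ1_cons, ih]; ring

lemma occ2_append (j k : α) (u v : List α) :
    occ [j, k] (u ++ v) = occ [j, k] u + occ [j, k] v +
      (if u.getLast? = some j ∧ v.head? = some k then 1 else 0) := by
  induction u with
  | nil => simp [occ_nil _ (List.cons_ne_nil _ _)]
  | cons a u ih =>
    cases u with
    | nil =>
      rw [List.singleton_append, occ2_cons, occ2_cons j k a []]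
      simp [occ_nil _ (List.cons_ne_nil _ _), eq_comm]
    | cons b u =>
      rw [List.cons_append, occ2_cons, ih, occ2_cons j k a (b :: u), List.getLast?_cons_cons]
      simp only [List.cons_append, List.head?_cons]
      exact (by intros; ring : ∀ x y z w : ℕ, x + y + z + w = x + w + y + z) _ _ _ _

variable (ψ : α → List α)

lemma head?_flatten_map (l : List α) (h : ∀ a ∈ l, ψ a ≠ []) :
    ((l.map ψ).flatten).head? = l.head?.bind fun a => (ψ a).head? := by
  cases l with
  | nil => simp
  | cons a l =>
    obtain ⟨x, t, hx⟩ := List.exists_cons_of_ne_nil (h a (by simp))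
    simp [hx]

lemma getLast?_flatten_map (l : List α) (h : ∀ a ∈ l, ψ a ≠ []) :
    ((l.map ψ).flatten).getLast? = l.getLast?.bind fun a => (ψ a).getLast? := by
  induction l with
  | nil => simp
  | cons a l ih =>
    cases l with
    | nil => simp
    | cons b l =>
      rw [List.map_cons, List.flatten_cons, List.getLast?_append,
        ih (fun x hx => h x (by simp [hx])), List.getLast?_cons_cons]
      obtain ⟨c, hc⟩ : ∃ c, (b :: l).getLast? = some c := by
        cases hcc : (b :: l).getLast? with
        | none => simp at hcc
        | some c => exact ⟨c, rfl⟩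
      have hcm : c ∈ b :: l := List.mem_of_mem_getLast? (by rw [hc]; rfl)
      obtain ⟨y, s, hy⟩ := List.exists_cons_of_ne_nil (h c (List.mem_cons_of_mem _ hcm))
      rw [hc]
      simp only [Option.bind_some, hy]
      cases hgl : (y :: s).getLast? with
      | none => simp at hgl
      | some z => simp

lemma occ1_flatten (j : α) (l : List α) :
    occ [j] ((l.map ψ).flatten) = (l.map fun a => occ [j] (ψ a)).sum := by
  induction l with
  | nil => simp [occ_nil _ (List.cons_ne_nil _ _)]
  | cons a l ih => simp [occ1_append, ih]

variable [Fintype α]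

lemma list_sum_eq (f : α → ℕ) (l : List α) :
    (l.map f).sum = ∑ k : α, occ [k] l * f k := by
  induction l with
  | nil => simp [occ_nil _ (List.cons_ne_nil _ _)]
  | cons a l ih =>
    simp only [List.map_cons, List.sum_cons, ih, occ1_cons, add_mul,
      Finset.sum_add_distrib, ite_mul, one_mul, zero_mul]
    rw [Finset.sum_ite_eq Finset.univ a f]
    simp [add_comm]

lemma occ2_flatten (j k : α) (l : List α) (h : ∀ a ∈ l, ψ a ≠ []) :
    occ [j, k] ((l.map ψ).flatten) = (l.map fun a => occ [j, k] (ψ a)).sum +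
      ∑ p : α × α, occ [p.1, p.2] l *
        (if (ψ p.1).getLast? = some j ∧ (ψ p.2).head? = some k then 1 else 0) := by
  induction l with
  | nil => simp [occ_nil _ (List.cons_ne_nil _ _)]
  | cons a l ih =>
    have hrest : ∀ x ∈ l, ψ x ≠ [] := fun x hx => h x (by simp [hx])
    rw [List.map_cons, List.flatten_cons, occ2_append, ih hrest,
      head?_flatten_map ψ l hrest]
    have key : ∀ p : α × α, occ [p.1, p.2] (a :: l) =
        occ [p.1, p.2] l + (if a = p.1 ∧ l.head? = some p.2 then 1 else 0) :=
      fun p => occ2_cons p.1 p.2 a l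
    simp only [key, add_mul, Finset.sum_add_distrib, List.map_cons, List.sum_cons]
    have key2 : (∑ p : α × α, (if a = p.1 ∧ l.head? = some p.2 then 1 else 0) *
        (if (ψ p.1).getLast? = some j ∧ (ψ p.2).head? = some k then 1 else 0)) =
        (if (ψ a).getLast? = some j ∧ (l.head?.bind fun x => (ψ x).head?) = some k
          then 1 else 0) := by
      cases l with
      | nil => simp
      | cons b l' =>
        rw [Finset.sum_eq_single (a, b)] <;> simp +contextual [Prod.ext_iff]
        tauto
        intro a1 b1 h _ _ ha hb
        exact h ha.symm hb.symm
    rw [key2]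
    ring

end Helpers

theorem stmt_11 {n : ℕ} (φ ψ : Fin n → List (Fin n))
    (hφ : ∀ i, φ i ≠ []) (hψ : ∀ i, ψ i ≠ []) :
    I2 (compSubst ψ φ) = I2 φ * I2 ψ ∧
    F1 (compSubst ψ φ) = F1 φ * F1 ψ ∧
    T2 (compSubst ψ φ) = T2 φ * T2 ψ ∧
    F2 (compSubst ψ φ) = F1 φ * F2 ψ + F2 φ * T2 ψ := by
  have hF1 : F1 (compSubst ψ φ) = F1 φ * F1 ψ := by
    ext i j
    rw [Matrix.mul_apply]
    simp only [F1, Matrix.of_apply, compSubst]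
    rw [occ1_flatten, list_sum_eq]
    push_cast
    rfl
  have hT2 : T2 (compSubst ψ φ) = T2 φ * T2 ψ := by
    ext p q
    obtain ⟨r, s⟩ := p
    obtain ⟨t, u⟩ := q
    rw [Matrix.mul_apply]
    simp only [T2, Matrix.of_apply, compSubst]
    simp only [getLast?_flatten_map ψ (φ r) (fun _ _ => hψ _),
      head?_flatten_map ψ (φ s) (fun _ _ => hψ _)]
    obtain ⟨a0, ha0⟩ : ∃ a0, (φ r).getLast? = some a0 := by
      cases hc : (φ r).getLast? with
      | none => exact absurd (List.getLast?_eq_none_iff.mp hc) (hφ r)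
      | some c => exact ⟨c, rfl⟩
    obtain ⟨b0, l0, hb0⟩ := List.exists_cons_of_ne_nil (hφ s)
    simp only [ha0, hb0]
    rw [Finset.sum_eq_single (a0, b0)]
    · simp
      exact if_congr Iff.rfl rfl rfl
    · intro p _ hp
      have hc : ¬(some a0 = some p.1 ∧ (b0 :: l0).head? = some p.2) := by
        simp only [List.head?_cons, Option.some.injEq]
        rintro ⟨h1, h2⟩
        exact hp (Prod.ext h1.symm h2.symm)
      rw [if_neg hc, zero_mul]
    · simp
  have hF2 : F2 (compSubst ψ φ) = F1 φ * F2 ψ + F2 φ * T2 ψ := by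
    ext i p
    obtain ⟨j, k⟩ := p
    simp only [Matrix.add_apply, Matrix.mul_apply, F1, F2, T2, Matrix.of_apply, compSubst]
    rw [occ2_flatten ψ j k (φ i) (fun _ _ => hψ _), list_sum_eq]
    push_cast
    rfl
  refine ⟨?_, hF1, hT2, hF2⟩
  show Matrix.fromBlocks (F1 (compSubst ψ φ)) (F2 (compSubst ψ φ)) 0 (T2 (compSubst ψ φ)) = _
  rw [I2, I2, Matrix.fromBlocks_multiply, hF1, hT2, hF2]
  simp
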